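/- Let N, k be positive integers with 4k² < N, and ω = e^{2πi/N}. Let Π_1, Π_2 be partitions of {1,…,2k} with |Π_1| + |Π_2| > 2k. Then |⟨I_{Π_1}| F^{⊗k,k} |I_{Π_2}⟩| ≤ N^k |Π_1|!·|Π_2|! / √((N)_{|Π_1|} (N)_{|Π_2|}) ≤ 2·(2k)!/√N, where ⟨I_{Π_1}| F^{⊗k,k} |I_{Π_2}⟩ = (|I_{Π_1}|·|I_{Π_2}|)^{−1/2} N^{−k} Σ_{m∈I_{Π_1}, n∈I_{Π_2}} ω^{m·n}, m·n = Σ_{j=1}^k m_j n_j − Σ_{j=k+1}^{2k} m_j n_j, and (N)_m = N(N−1)⋯(N−m+1). -/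

import Mathlib

open scoped BigOperators Classical

/-- The number of blocks `|Π|` of the partition corresponding to `r`. -/
noncomputable def numBlocks {n : ℕ} (r : Setoid (Fin n)) : ℕ :=
  Nat.card (Quotient r)

/-- The Fourier transform `F = N^{-1/2} ∑_{m,n=1}^N ω^{mn} |m⟩⟨n|`, `ω = e^{2πi/N}`. -/
noncomputable def Fmat (N : ℕ) : Matrix (Fin N) (Fin N) ℂ :=
  fun i j => (Real.sqrt N : ℂ)⁻¹ *
    Complex.exp (2 * Real.pi * Complex.I * (((i : ℕ) + 1) * ((j : ℕ) + 1)) / N)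

/-- `F^{⊗k,k} = F^{⊗k} ⊗ (conj F)^{⊗k}` as a matrix on `(ℂ^N)^{⊗2k}`. -/
noncomputable def Fkk (N k : ℕ) : Matrix (Fin (2*k) → Fin N) (Fin (2*k) → Fin N) ℂ :=
  fun a b => ∏ j : Fin (2*k),
    if (j : ℕ) < k then Fmat N (a j) (b j) else (starRingEnd ℂ) (Fmat N (a j) (b j))

/-- The set `I_Π` of tuples whose equality pattern is exactly `r`. -/
def Iset (N n : ℕ) (r : Setoid (Fin n)) : Set (Fin n → Fin N) :=
  {v | ∀ i j : Fin n, v i = v j ↔ r i j}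

/-- The unit vector `|I_Π⟩ = |I_Π|^{-1/2} ∑_{n ∈ I_Π} |n⟩`. -/
noncomputable def ketI (N n : ℕ) (r : Setoid (Fin n)) : (Fin n → Fin N) → ℂ :=
  fun v => if v ∈ Iset N n r then ((Real.sqrt ((Iset N n r).ncard) : ℂ))⁻¹ else 0

/-- The matrix element `⟨I_{Π₁}| F^{⊗k,k} |I_{Π₂}⟩`. -/
noncomputable def matEltI (N k : ℕ) (r₁ r₂ : Setoid (Fin (2*k))) : ℂ :=
  ∑ a : Fin (2*k) → Fin N, ∑ b : Fin (2*k) → Fin N,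
    (starRingEnd ℂ) (ketI N (2*k) r₁ a) * Fkk N k a b * ketI N (2*k) r₂ b




noncomputable def efun (N : ℕ) (m : ℤ) : ℂ := Complex.exp (2 * Real.pi * Complex.I * m / N)

lemma efun_add (N : ℕ) (m m' : ℤ) : efun N (m + m') = efun N m * efun N m' := by
  rw [efun, efun, efun, ← Complex.exp_add]
  congr 1; push_cast; ring

lemma efun_sum {ι : Type*} (N : ℕ) (s : Finset ι) (f : ι → ℤ) :
    efun N (∑ j ∈ s, f j) = ∏ j ∈ s, efun N (f j) := by
  classical
  induction s using Finset.induction with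
  | empty => simp [efun]
  | insert _ _ h ih => rw [Finset.sum_insert h, Finset.prod_insert h, efun_add, ih]

lemma efun_natmul (N : ℕ) (m : ℤ) (n : ℕ) : efun N ((n : ℤ) * m) = efun N m ^ n := by
  rw [efun, efun, ← Complex.exp_nat_mul]
  congr 1; push_cast; ring

lemma efun_eq_one_iff {N : ℕ} (hN : 0 < N) (m : ℤ) : efun N m = 1 ↔ (N : ℤ) ∣ m := by
  have h2 : (2 * (Real.pi : ℂ) * Complex.I) ≠ 0 := by
    simp [Real.pi_ne_zero, Complex.I_ne_zero]
  have hNc : (N : ℂ) ≠ 0 := Nat.cast_ne_zero.mpr hN.ne'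
  rw [efun, Complex.exp_eq_one_iff]
  constructor
  · rintro ⟨n, hn⟩
    have h1 : (2 * (Real.pi : ℂ) * Complex.I) * ((m : ℂ) / N) =
        (2 * (Real.pi : ℂ) * Complex.I) * n := by
      rw [mul_div_assoc] at hn; rw [hn]; ring
    have h3 : (m : ℂ) / N = n := mul_left_cancel₀ h2 h1
    have h4 : (m : ℂ) = n * N := by field_simp at h3; rw [h3]; ring
    have h5 : m = n * N := by exact_mod_cast h4
    exact ⟨n, by rw [h5, mul_comm]⟩
  · rintro ⟨n, rfl⟩
    refine ⟨n, ?_⟩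
    field_simp
    push_cast
    ring

lemma sum_efun_geom {N : ℕ} (hN : 0 < N) (γ : ℤ) :
    (∑ u : Fin N, efun N (((u : ℕ) + 1 : ℤ) * γ)) = if (N : ℤ) ∣ γ then (N : ℂ) else 0 := by
  have key : ∀ u : ℕ, efun N ((u + 1 : ℤ) * γ) = efun N γ ^ (u + 1) := by
    intro u
    have h : ((u : ℤ) + 1) * γ = (((u + 1 : ℕ) : ℤ)) * γ := by push_cast; ring
    rw [h, efun_natmul]
  by_cases hd : (N : ℤ) ∣ γ
  · rw [if_pos hd]
    have h1 : efun N γ = 1 := (efun_eq_one_iff hN γ).mpr hd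
    simp [key, h1]
  · rw [if_neg hd]
    have h1 : efun N γ ≠ 1 := fun h => hd ((efun_eq_one_iff hN γ).mp h)
    have hNpow : efun N γ ^ N = 1 := by
      rw [← efun_natmul]
      exact (efun_eq_one_iff hN _).mpr ⟨γ, by ring⟩
    calc (∑ u : Fin N, efun N (((u : ℕ) + 1 : ℤ) * γ))
        = ∑ u : Fin N, efun N γ * efun N γ ^ (u : ℕ) := by
          refine Finset.sum_congr rfl fun u _ => ?_
          rw [key]; ring
      _ = efun N γ * ∑ i ∈ Finset.range N, efun N γ ^ i := by
          rw [← Finset.mul_sum, Fin.sum_univ_eq_sum_range (fun i => efun N γ ^ i)]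
      _ = 0 := by rw [geom_sum_eq h1, hNpow]; simp



lemma sum_sign_stabilizer {Q R : Type*} [Fintype Q] [DecidableEq Q] [DecidableEq R] (x : Q → R) :
    (∑ π ∈ Finset.univ.filter (fun π : Equiv.Perm Q => x ∘ π = x),
      ((Equiv.Perm.sign π : ℤ) : ℂ)) = if Function.Injective x then 1 else 0 := by
  by_cases hinj : Function.Injective x
  · rw [if_pos hinj]
    have hfil : Finset.univ.filter (fun π : Equiv.Perm Q => x ∘ π = x) = {1} := by
      ext π
      simp only [Finset.mem_filter, Finset.mem_univ, true_and, Finset.mem_singleton]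
      constructor
      · intro h; ext q; exact hinj (congrFun h q)
      · rintro rfl; rfl
    simp [hfil]
  · rw [if_neg hinj]
    have hex : ∃ a b, x a = x b ∧ a ≠ b := by
      unfold Function.Injective at hinj; push_neg at hinj; exact hinj
    obtain ⟨a, b, hxab, hne⟩ := hex
    have hxswap : x ∘ (Equiv.swap a b) = x := by
      funext q
      simp only [Function.comp_apply, Equiv.swap_apply_def]
      split_ifs with h1 h2
      · rw [h1, hxab]
      · rw [h2, hxab]
      · rfl
    refine Finset.sum_involution (fun π _ => (Equiv.swap a b) * π) ?_ ?_ ?_ ?_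
    · intro π hπ
      rw [Equiv.Perm.sign_mul, Equiv.Perm.sign_swap hne]
      push_cast
      ring
    · intro π hπ _
      intro h
      have h' : Equiv.swap a b * π = π := h
      have : Equiv.swap a b = 1 := mul_right_cancel (by rw [h', one_mul])
      have := congrFun (congrArg (fun e : Equiv.Perm Q => (e : Q → Q)) this) a
      simp [Equiv.swap_apply_left] at this
      exact hne this.symm
    · intro π hπ
      simp only [Finset.mem_filter, Finset.mem_univ, true_and] at hπ ⊢
      have : ((Equiv.swap a b) * π : Equiv.Perm Q) = (Equiv.swap a b : Q → Q) ∘ π := rfl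
      rw [this, ← Function.comp_assoc, hxswap, hπ]
    · intro π hπ
      show Equiv.swap a b * (Equiv.swap a b * π) = π
      rw [← mul_assoc, Equiv.swap_mul_self, one_mul]

lemma inj_sum_eq {Q R : Type*} [Fintype Q] [DecidableEq Q] [Fintype R] [DecidableEq R] (F : (Q → R) → ℂ) :
    ∑ x ∈ Finset.univ.filter (fun x : Q → R => Function.Injective x), F x
      = ∑ π : Equiv.Perm Q, ((Equiv.Perm.sign π : ℤ) : ℂ) *
          ∑ x ∈ Finset.univ.filter (fun x : Q → R => x ∘ π = x), F x := by
  have step1 : ∀ π : Equiv.Perm Q,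
      ((Equiv.Perm.sign π : ℤ) : ℂ) *
          ∑ x ∈ Finset.univ.filter (fun x : Q → R => x ∘ π = x), F x
        = ∑ x : Q → R, (if x ∘ π = x then ((Equiv.Perm.sign π : ℤ) : ℂ) else 0) * F x := by
    intro π
    rw [Finset.mul_sum, Finset.sum_filter]
    refine Finset.sum_congr rfl fun x _ => ?_
    split_ifs <;> simp
  symm
  calc (∑ π : Equiv.Perm Q, ((Equiv.Perm.sign π : ℤ) : ℂ) *
          ∑ x ∈ Finset.univ.filter (fun x : Q → R => x ∘ π = x), F x)
      = ∑ π : Equiv.Perm Q, ∑ x : Q → R,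
          (if x ∘ π = x then ((Equiv.Perm.sign π : ℤ) : ℂ) else 0) * F x :=
        Finset.sum_congr rfl fun π _ => step1 π
    _ = ∑ x : Q → R, ∑ π : Equiv.Perm Q,
          (if x ∘ π = x then ((Equiv.Perm.sign π : ℤ) : ℂ) else 0) * F x := Finset.sum_comm
    _ = ∑ x : Q → R, (if Function.Injective x then (1:ℂ) else 0) * F x := by
        refine Finset.sum_congr rfl fun x _ => ?_
        rw [← Finset.sum_mul, ← Finset.sum_filter, sum_sign_stabilizer]
    _ = ∑ x ∈ Finset.univ.filter (fun x : Q → R => Function.Injective x), F x := by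
        rw [Finset.sum_filter]
        refine Finset.sum_congr rfl fun x _ => ?_
        split_ifs <;> simp

def sameCycleSetoid {Q : Type*} (π : Equiv.Perm Q) : Setoid Q :=
  ⟨π.SameCycle, ⟨Equiv.Perm.SameCycle.refl π, Equiv.Perm.SameCycle.symm,
    Equiv.Perm.SameCycle.trans⟩⟩

lemma fixed_zpow {Q R : Type*} {π : Equiv.Perm Q} {x : Q → R} (hx : x ∘ π = x) :
    ∀ (i : ℤ) (a : Q), x ((π ^ i) a) = x a := by
  have h1 : ∀ a, x (π a) = x a := fun a => congrFun hx a
  intro i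
  induction i using Int.induction_on with
  | zero => simp
  | succ n ih =>
    intro a
    have h2 : (π ^ ((n : ℤ) + 1)) a = (π ^ (n : ℤ)) (π a) := by
      rw [zpow_add_one]; rfl
    rw [h2, ih (π a), h1 a]
  | pred n ih =>
    intro a
    have h2 : (π ^ (-(n : ℤ) - 1)) a = (π ^ (-(n : ℤ))) (π⁻¹ a) := by
      rw [zpow_sub_one]; rfl
    have h3 : x (π⁻¹ a) = x a := by
      conv_rhs => rw [← (show π (π⁻¹ a) = a from Equiv.apply_symm_apply π a)]
      rw [h1 (π⁻¹ a)]
    rw [h2, ih (π⁻¹ a), h3]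

lemma fixed_iff_sameCycle {Q R : Type*} {π : Equiv.Perm Q} {x : Q → R} :
    x ∘ π = x ↔ ∀ a b, π.SameCycle a b → x a = x b := by
  constructor
  · rintro hx a b ⟨i, hi⟩
    rw [← hi]; exact (fixed_zpow hx i a).symm ▸ (fixed_zpow hx i a)
  · intro h
    funext a
    exact h (π a) a ⟨-1, by simp⟩

lemma fixed_sum_reindex {Q R : Type*} [Fintype Q] [DecidableEq Q] [Fintype R] [DecidableEq R] (π : Equiv.Perm Q)
    (F : (Q → R) → ℂ) :
    ∑ x ∈ Finset.univ.filter (fun x : Q → R => x ∘ π = x), F x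
      = ∑ z : Quotient (sameCycleSetoid π) → R,
          F (z ∘ (Quotient.mk (sameCycleSetoid π))) := by
  have hmkpi : ∀ a : Q, Quotient.mk (sameCycleSetoid π) (π a) =
      Quotient.mk (sameCycleSetoid π) a :=
    fun a => Quotient.sound ⟨-1, by simp⟩
  refine Finset.sum_bij' (fun x _ => x ∘ Quotient.out)
    (fun z _ => z ∘ Quotient.mk (sameCycleSetoid π)) (fun _ _ => Finset.mem_univ _) ?_ ?_ ?_ ?_
  · intro z _
    simp only [Finset.mem_filter, Finset.mem_univ, true_and]
    funext a
    exact congrArg z (hmkpi a)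
  · intro x hx
    simp only [Finset.mem_filter, Finset.mem_univ, true_and] at hx
    funext a
    have hr : (sameCycleSetoid π).r (Quotient.out (Quotient.mk (sameCycleSetoid π) a)) a :=
      Quotient.exact (Quotient.out_eq (Quotient.mk (sameCycleSetoid π) a))
    exact fixed_iff_sameCycle.mp hx _ _ hr
  · intro z _
    funext q
    simp only [Function.comp_apply, Quotient.out_eq]
  · intro x hx
    simp only [Finset.mem_filter, Finset.mem_univ, true_and] at hx
    have : (x ∘ Quotient.out) ∘ Quotient.mk (sameCycleSetoid π) = x := by
      funext a
      have hr : (sameCycleSetoid π).r (Quotient.out (Quotient.mk (sameCycleSetoid π) a)) a :=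
        Quotient.exact (Quotient.out_eq (Quotient.mk (sameCycleSetoid π) a))
      exact fixed_iff_sameCycle.mp hx _ _ hr
    rw [this]



lemma numBlocks_eq_card {n : ℕ} (r : Setoid (Fin n)) [Fintype (Quotient r)] :
    numBlocks r = Fintype.card (Quotient r) := Nat.card_eq_fintype_card

lemma numBlocks_le {n : ℕ} (r : Setoid (Fin n)) : numBlocks r ≤ n := by
  classical
  rw [numBlocks_eq_card]
  have : Fintype.card (Quotient r) ≤ Fintype.card (Fin n) :=
    Fintype.card_le_of_surjective (Quotient.mk r) (fun q => ⟨q.out, Quotient.out_eq q⟩)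
  simpa using this

lemma numBlocks_pos {n : ℕ} (hn : 0 < n) (r : Setoid (Fin n)) : 0 < numBlocks r := by
  classical
  rw [numBlocks_eq_card]
  have : Nonempty (Quotient r) := ⟨Quotient.mk r ⟨0, hn⟩⟩
  exact Fintype.card_pos

noncomputable def isetEquiv (N n : ℕ) (r : Setoid (Fin n)) :
    ↥(Iset N n r) ≃ (Quotient r ↪ Fin N) where
  toFun v := ⟨Quotient.lift v.1 (fun i j hij => ((v.2 i j).mpr hij)), by
    intro c c'
    induction c using Quotient.ind
    induction c' using Quotient.ind
    intro h
    exact Quotient.sound ((v.2 _ _).mp h)⟩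
  invFun f := ⟨f ∘ Quotient.mk r, by
    intro i j
    constructor
    · intro h
      exact Quotient.exact (f.injective h)
    · intro h
      exact congrArg f (Quotient.sound h)⟩
  left_inv v := by
    apply Subtype.ext
    funext i
    rfl
  right_inv f := by
    apply Function.Embedding.ext
    intro c
    induction c using Quotient.ind
    rfl

lemma iset_ncard (N n : ℕ) (r : Setoid (Fin n)) :
    (Iset N n r).ncard = N.descFactorial (numBlocks r) := by
  classical
  rw [← Nat.card_coe_set_eq, Nat.card_congr (isetEquiv N n r), Nat.card_eq_fintype_card,
    Fintype.card_embedding_eq, Fintype.card_fin, numBlocks_eq_card]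

lemma iset_sum (N n : ℕ) (r : Setoid (Fin n)) (g : (Fin n → Fin N) → ℂ) :
    ∑ a ∈ Finset.univ.filter (· ∈ Iset N n r), g a
      = ∑ x ∈ Finset.univ.filter (fun x : Quotient r → Fin N => Function.Injective x),
          g (fun i => x (Quotient.mk r i)) := by
  classical
  refine Finset.sum_bij' (fun a _ => a ∘ Quotient.out) (fun x _ => x ∘ Quotient.mk r)
    ?_ ?_ ?_ ?_ ?_
  · intro a ha
    simp only [Finset.mem_filter, Finset.mem_univ, true_and] at ha ⊢
    intro c c' h
    induction c using Quotient.ind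
    induction c' using Quotient.ind
    rename_i i j
    simp only [Function.comp_apply] at h
    have h2 : r (Quotient.mk r i).out (Quotient.mk r j).out := (ha _ _).mp h
    have h3 : Quotient.mk r (Quotient.mk r i).out = Quotient.mk r (Quotient.mk r j).out :=
      Quotient.sound h2
    rwa [Quotient.out_eq, Quotient.out_eq] at h3
  · intro x hx
    simp only [Finset.mem_filter, Finset.mem_univ, true_and] at hx ⊢
    intro i j
    constructor
    · intro h
      exact Quotient.exact (hx h)
    · intro h
      exact congrArg x (Quotient.sound h)
  · intro a ha
    simp only [Finset.mem_filter, Finset.mem_univ, true_and] at ha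
    funext i
    have hr : r (Quotient.mk r i).out i := Quotient.exact (Quotient.out_eq (Quotient.mk r i))
    exact (ha _ _).mpr hr
  · intro x _
    funext c
    simp only [Function.comp_apply, Quotient.out_eq]
  · intro a ha
    simp only [Finset.mem_filter, Finset.mem_univ, true_and] at ha
    show g a = g (fun i => (a ∘ Quotient.out) (Quotient.mk r i))
    have heq : (fun i => (a ∘ Quotient.out) (Quotient.mk r i)) = a := by
      funext i
      have hr : r (Quotient.mk r i).out i := Quotient.exact (Quotient.out_eq (Quotient.mk r i))
      exact (ha _ _).mpr hr
    rw [heq]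



lemma core_bound {T : Type*} [Fintype T] [DecidableEq T] {N : ℕ} (hN : 0 < N) {n2 : ℕ}
    (σ : Fin n2 → ℤ) (hσ : ∀ j, σ j = 1 ∨ σ j = -1)
    (c : Fin n2 → T) (hc : Function.Surjective c)
    (Y : Finset (Fin n2 → Fin N)) :
    ‖(∑ y ∈ Y, ∑ z : T → Fin N,
        efun N (∑ j, σ j * (((z (c j) : ℕ) : ℤ) + 1) * (((y j : ℕ) : ℤ) + 1)))‖
      ≤ (N : ℝ) ^ n2 := by
  set γ : (Fin n2 → Fin N) → T → ℤ :=
    fun y t => ∑ j ∈ Finset.univ.filter (fun j => c j = t), σ j * (((y j : ℕ) : ℤ) + 1) with hγ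
  -- inner sum evaluation
  have inner : ∀ y : Fin n2 → Fin N,
      (∑ z : T → Fin N, efun N (∑ j, σ j * (((z (c j) : ℕ) : ℤ) + 1) * (((y j : ℕ) : ℤ) + 1)))
        = if (∀ t, (N : ℤ) ∣ γ y t) then (N : ℂ) ^ (Fintype.card T) else 0 := by
    intro y
    have exp_eq : ∀ z : T → Fin N,
        (∑ j, σ j * (((z (c j) : ℕ) : ℤ) + 1) * (((y j : ℕ) : ℤ) + 1))
          = ∑ t : T, (((z t : ℕ) : ℤ) + 1) * γ y t := by
      intro z
      rw [← Finset.sum_fiberwise Finset.univ c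
        (fun j => σ j * (((z (c j) : ℕ) : ℤ) + 1) * (((y j : ℕ) : ℤ) + 1))]
      refine Finset.sum_congr rfl fun t _ => ?_
      rw [hγ, Finset.mul_sum]
      refine Finset.sum_congr rfl fun j hj => ?_
      have hcj : c j = t := (Finset.mem_filter.mp hj).2
      rw [hcj]; ring
    calc (∑ z : T → Fin N,
            efun N (∑ j, σ j * (((z (c j) : ℕ) : ℤ) + 1) * (((y j : ℕ) : ℤ) + 1)))
        = ∑ z : T → Fin N, ∏ t : T, efun N ((((z t : ℕ) : ℤ) + 1) * γ y t) := by
          refine Finset.sum_congr rfl fun z _ => ?_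
          rw [exp_eq z, efun_sum]
      _ = ∏ t : T, ∑ u : Fin N, efun N (((u : ℕ) + 1 : ℤ) * γ y t) := by
          rw [Finset.prod_univ_sum]
          rw [Fintype.piFinset_univ]
      _ = ∏ t : T, if (N : ℤ) ∣ γ y t then (N : ℂ) else 0 :=
          Finset.prod_congr rfl fun t _ => sum_efun_geom hN (γ y t)
      _ = if (∀ t, (N : ℤ) ∣ γ y t) then (N : ℂ) ^ (Fintype.card T) else 0 := by
          by_cases h : ∀ t, (N : ℤ) ∣ γ y t
          · rw [if_pos h]
            rw [Finset.prod_congr rfl (fun t _ => if_pos (h t)), Finset.prod_const,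
              Finset.card_univ]
          · rw [if_neg h]
            push_neg at h
            obtain ⟨t, ht⟩ := h
            exact Finset.prod_eq_zero (Finset.mem_univ t) (if_neg ht)
  -- the count of good y's
  obtain ⟨s, hs⟩ := hc.hasRightInverse
  have hsinj : Function.Injective s := fun t t' h => by rw [← hs t, ← hs t', h]
  set Sset : Finset (Fin n2) := (Finset.univ.image s)ᶜ with hSset
  set W : Finset (Fin n2 → Fin N) :=
    Finset.univ.filter (fun y : Fin n2 → Fin N => ∀ t, (N : ℤ) ∣ γ y t) with hW
  have hcount : W.card ≤ N ^ (n2 - Fintype.card T) := by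
    have hinj : Set.InjOn (fun (y : Fin n2 → Fin N) (o : {j // j ∈ Sset}) => y o.1) ↑W := by
      intro y₁ hy₁ y₂ hy₂ hΦ
      simp only [Finset.coe_filter, Set.mem_setOf_eq, hW, Finset.mem_filter] at hy₁ hy₂
      have key : ∀ j, y₁ j = y₂ j := by
        intro j
        by_cases hj : j ∈ Sset
        · exact congrFun hΦ ⟨j, hj⟩
        · have hjim : j ∈ Finset.univ.image s := by
            by_contra hcon
            exact hj (Finset.mem_compl.mpr hcon)
          obtain ⟨t, _, hst⟩ := Finset.mem_image.mp hjim
          have hcjt : c j = t := by rw [← hst, hs t]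
          have d₁ := hy₁.2 t
          have d₂ := hy₂.2 t
          have hsub : (N : ℤ) ∣ γ y₁ t - γ y₂ t := dvd_sub d₁ d₂
          have hdiff : γ y₁ t - γ y₂ t = σ j * (((y₁ j : ℕ) : ℤ) - ((y₂ j : ℕ) : ℤ)) := by
            rw [hγ]
            rw [← Finset.sum_sub_distrib]
            rw [Finset.sum_eq_single_of_mem j
              (Finset.mem_filter.mpr ⟨Finset.mem_univ j, hcjt⟩)]
            · ring
            · intro j' hj' hne
              have hj'S : j' ∈ Sset := by
                by_contra hcon
                have hj'im : j' ∈ Finset.univ.image s := by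
                  by_contra hcon2
                  exact hcon (Finset.mem_compl.mpr hcon2)
                obtain ⟨t', _, hst'⟩ := Finset.mem_image.mp hj'im
                have : c j' = t' := by rw [← hst', hs t']
                have hct : c j' = t := (Finset.mem_filter.mp hj').2
                have : j' = j := by rw [← hst, ← hst']; rw [hct] at this; rw [this]
                exact hne this
              have : y₁ j' = y₂ j' := congrFun hΦ ⟨j', hj'S⟩
              rw [this]; ring
          rw [hdiff] at hsub
          have hdvd2 : (N : ℤ) ∣ (((y₁ j : ℕ) : ℤ) - ((y₂ j : ℕ) : ℤ)) := by
            rcases hσ j with h1 | h1 <;> rw [h1] at hsub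
            · simpa using hsub
            · rw [neg_one_mul] at hsub
              exact (dvd_neg).mp hsub
          have hz : (((y₁ j : ℕ) : ℤ) - ((y₂ j : ℕ) : ℤ)) = 0 := by
            refine Int.eq_zero_of_abs_lt_dvd hdvd2 ?_
            have h1 := (y₁ j).is_lt
            have h2 := (y₂ j).is_lt
            rw [abs_lt]
            constructor <;> [skip; skip] <;> push_cast <;> omega
          have : (y₁ j : ℕ) = (y₂ j : ℕ) := by omega
          exact Fin.ext this
      exact funext key
    have hmap : ∀ y ∈ W, (fun (o : {j // j ∈ Sset}) => y o.1) ∈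
        (Finset.univ : Finset ({j // j ∈ Sset} → Fin N)) := fun _ _ => Finset.mem_univ _
    have := Finset.card_le_card_of_injOn _ hmap hinj
    calc W.card ≤ (Finset.univ : Finset ({j // j ∈ Sset} → Fin N)).card := this
      _ = N ^ Sset.card := by
          rw [Finset.card_univ, Fintype.card_fun, Fintype.card_fin, Fintype.card_coe]
      _ = N ^ (n2 - Fintype.card T) := by
          congr 1
          rw [hSset, Finset.card_compl, Finset.card_image_of_injective _ hsinj,
            Finset.card_univ, Fintype.card_fin]
  -- assemble
  have hTle : Fintype.card T ≤ n2 := by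
    have := Fintype.card_le_of_injective s hsinj
    simpa using this
  calc ‖(∑ y ∈ Y, ∑ z : T → Fin N,
        efun N (∑ j, σ j * (((z (c j) : ℕ) : ℤ) + 1) * (((y j : ℕ) : ℤ) + 1)))‖
      ≤ ∑ y ∈ Y, ‖(∑ z : T → Fin N,
        efun N (∑ j, σ j * (((z (c j) : ℕ) : ℤ) + 1) * (((y j : ℕ) : ℤ) + 1)))‖ :=
        norm_sum_le _ _
    _ = ∑ y ∈ Y, (if (∀ t, (N : ℤ) ∣ γ y t) then (N : ℝ) ^ (Fintype.card T) else 0) := by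
        refine Finset.sum_congr rfl fun y _ => ?_
        rw [inner y]
        split_ifs
        · rw [norm_pow, Complex.norm_natCast]
        · simp
    _ ≤ ∑ y ∈ (Finset.univ : Finset (Fin n2 → Fin N)),
          (if (∀ t, (N : ℤ) ∣ γ y t) then (N : ℝ) ^ (Fintype.card T) else 0) := by
        refine Finset.sum_le_sum_of_subset_of_nonneg (Finset.subset_univ Y) fun y _ _ => ?_
        split_ifs
        · positivity
        · exact le_refl 0
    _ = W.card * (N : ℝ) ^ (Fintype.card T) := by
        rw [← Finset.sum_filter, ← hW, Finset.sum_const, nsmul_eq_mul]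
    _ ≤ (N : ℝ) ^ (n2 - Fintype.card T) * (N : ℝ) ^ (Fintype.card T) := by
        have : (W.card : ℝ) ≤ (N : ℝ) ^ (n2 - Fintype.card T) := by
          exact_mod_cast hcount
        exact mul_le_mul_of_nonneg_right this (by positivity)
    _ = (N : ℝ) ^ n2 := by
        rw [← pow_add, Nat.sub_add_cancel hTle]



set_option maxHeartbeats 1000000 in
lemma S_bound {N n2 : ℕ} (hN : 0 < N) (σ : Fin n2 → ℤ) (hσ : ∀ j, σ j = 1 ∨ σ j = -1)
    (r₁ : Setoid (Fin n2)) (Y : Finset (Fin n2 → Fin N)) :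
    ‖(∑ a ∈ Finset.univ.filter (· ∈ Iset N n2 r₁), ∑ b ∈ Y,
        efun N (∑ j, σ j * (((a j : ℕ) : ℤ) + 1) * (((b j : ℕ) : ℤ) + 1)))‖
      ≤ ((numBlocks r₁).factorial : ℝ) * (N : ℝ) ^ n2 := by
  rw [iset_sum N n2 r₁
    (fun a => ∑ b ∈ Y, efun N (∑ j, σ j * (((a j : ℕ) : ℤ) + 1) * (((b j : ℕ) : ℤ) + 1)))]
  show ‖(∑ x ∈ Finset.univ.filter
      (fun x : Quotient r₁ → Fin N => Function.Injective x),
      ∑ b ∈ Y, efun N (∑ j, σ j * (((x (Quotient.mk r₁ j) : ℕ) : ℤ) + 1)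
        * (((b j : ℕ) : ℤ) + 1)))‖
    ≤ ((numBlocks r₁).factorial : ℝ) * (N : ℝ) ^ n2
  rw [inj_sum_eq
    (fun x : Quotient r₁ → Fin N => ∑ b ∈ Y,
      efun N (∑ j, σ j * (((x (Quotient.mk r₁ j) : ℕ) : ℤ) + 1) * (((b j : ℕ) : ℤ) + 1)))]
  have habs_sign : ∀ π : Equiv.Perm (Quotient r₁),
      ‖((Equiv.Perm.sign π : ℤ) : ℂ)‖ = 1 := by
    intro π
    rcases Int.units_eq_one_or (Equiv.Perm.sign π) with h | h <;> rw [h] <;> simp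
  have hbound : ∀ π : Equiv.Perm (Quotient r₁),
      ‖(∑ x ∈ Finset.univ.filter
          (fun x : Quotient r₁ → Fin N => x ∘ π = x),
        ∑ b ∈ Y, efun N (∑ j, σ j * (((x (Quotient.mk r₁ j) : ℕ) : ℤ) + 1)
          * (((b j : ℕ) : ℤ) + 1)))‖ ≤ (N : ℝ) ^ n2 := by
    intro π
    rw [fixed_sum_reindex π
      (fun x : Quotient r₁ → Fin N => ∑ b ∈ Y,
        efun N (∑ j, σ j * (((x (Quotient.mk r₁ j) : ℕ) : ℤ) + 1) * (((b j : ℕ) : ℤ) + 1)))]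
    rw [Finset.sum_comm]
    exact core_bound hN σ hσ
      (fun j => Quotient.mk (sameCycleSetoid π) (Quotient.mk r₁ j))
      (fun q => ⟨(q.out).out, by
        show Quotient.mk (sameCycleSetoid π) (Quotient.mk r₁ (q.out.out)) = q
        rw [Quotient.out_eq, Quotient.out_eq]⟩) Y
  calc ‖(∑ π : Equiv.Perm (Quotient r₁), ((Equiv.Perm.sign π : ℤ) : ℂ) *
          ∑ x ∈ Finset.univ.filter (fun x : Quotient r₁ → Fin N => x ∘ π = x),
        ∑ b ∈ Y, efun N (∑ j, σ j * (((x (Quotient.mk r₁ j) : ℕ) : ℤ) + 1)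
          * (((b j : ℕ) : ℤ) + 1)))‖
      ≤ ∑ π : Equiv.Perm (Quotient r₁), ‖(((Equiv.Perm.sign π : ℤ) : ℂ) *
          ∑ x ∈ Finset.univ.filter (fun x : Quotient r₁ → Fin N => x ∘ π = x),
        ∑ b ∈ Y, efun N (∑ j, σ j * (((x (Quotient.mk r₁ j) : ℕ) : ℤ) + 1)
          * (((b j : ℕ) : ℤ) + 1)))‖ := norm_sum_le _ _
    _ ≤ ∑ _π : Equiv.Perm (Quotient r₁), (N : ℝ) ^ n2 := by
        refine Finset.sum_le_sum fun π _ => ?_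
        rw [norm_mul, habs_sign π, one_mul]
        exact hbound π
    _ = ((numBlocks r₁).factorial : ℝ) * (N : ℝ) ^ n2 := by
        rw [Finset.sum_const, Finset.card_univ, nsmul_eq_mul, Fintype.card_perm,
          numBlocks_eq_card]



lemma fact_mul_fact_le (a : ℕ) (ha : 1 ≤ a) : ∀ b, 1 ≤ b →
    a.factorial * b.factorial ≤ (a + b - 1).factorial := by
  intro b
  induction b with
  | zero => omega
  | succ n ih =>
    intro _
    by_cases hn : 1 ≤ n
    · have h1 := ih hn
      have h2 : a + (n + 1) - 1 = (a + n - 1) + 1 := by omega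
      rw [h2, Nat.factorial_succ, Nat.factorial_succ]
      calc a.factorial * ((n + 1) * n.factorial)
          = (a.factorial * n.factorial) * (n + 1) := by ring
        _ ≤ (a + n - 1).factorial * (n + 1) := Nat.mul_le_mul_right _ h1
        _ ≤ (a + n - 1).factorial * (a + n - 1 + 1) := by
            refine Nat.mul_le_mul_left _ ?_
            omega
        _ = (a + n - 1 + 1) * (a + n - 1).factorial := by ring
    · have hn0 : n = 0 := by omega
      subst hn0
      have : a + 1 - 1 = a := by omega
      rw [this]
      simp [Nat.factorial]

lemma factorial_bound (k : ℕ) : ∀ e m₁ m₂ : ℕ, 1 ≤ m₁ → m₁ ≤ 2*k → 1 ≤ m₂ → m₂ ≤ 2*k →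
    m₁ + m₂ = 2*k + 1 + e →
    m₁.factorial * m₂.factorial ≤ (2*k).factorial * (2*k)^e := by
  intro e
  induction e with
  | zero =>
    intro m₁ m₂ h1 h2 h3 h4 he
    have := fact_mul_fact_le m₁ h1 m₂ h3
    have heq : m₁ + m₂ - 1 = 2*k := by omega
    rw [heq] at this
    simpa using this
  | succ e ih =>
    intro m₁ m₂ h1 h2 h3 h4 he
    have hm₂ : 2 ≤ m₂ := by omega
    have hsub : m₂ = (m₂ - 1) + 1 := by omega
    calc m₁.factorial * m₂.factorial
        = m₁.factorial * ((m₂ - 1).factorial * m₂) := by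
          conv_lhs => rw [hsub]
          rw [Nat.factorial_succ, ← hsub]
          ring
      _ = (m₁.factorial * (m₂ - 1).factorial) * m₂ := by ring
      _ ≤ ((2*k).factorial * (2*k)^e) * m₂ := by
          refine Nat.mul_le_mul_right _ (ih m₁ (m₂ - 1) h1 h2 (by omega) (by omega) (by omega))
      _ ≤ ((2*k).factorial * (2*k)^e) * (2*k) := Nat.mul_le_mul_left _ h4
      _ = (2*k).factorial * (2*k)^(e+1) := by rw [pow_succ]; ring

lemma desc_lb_aux (N : ℕ) : ∀ m, m ≤ N →
    2*N^(m+1) ≤ 2*N*(N.descFactorial m) + m*(m-1)*N^m := by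
  intro m
  induction m with
  | zero => simp [pow_one]
  | succ m ih =>
    intro hm
    have hmN : m ≤ N := by omega
    have IH := ih hmN
    have hsplit : 2*N^(m+2) = (N-m)*(2*N^(m+1)) + m*(2*N^(m+1)) := by
      have : (N - m) + m = N := Nat.sub_add_cancel hmN
      calc 2*N^(m+2) = N * (2*N^(m+1)) := by ring
        _ = ((N-m) + m) * (2*N^(m+1)) := by rw [this]
        _ = (N-m)*(2*N^(m+1)) + m*(2*N^(m+1)) := by ring
    have hstep1 : (N-m)*(2*N^(m+1)) ≤ (N-m)*(2*N*(N.descFactorial m) + m*(m-1)*N^m) :=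
      Nat.mul_le_mul_left _ IH
    have hdesc : N.descFactorial (m+1) = (N - m) * N.descFactorial m := Nat.descFactorial_succ N m
    have hmm : m*(m-1) + 2*m = (m+1)*((m+1)-1) := by
      cases m with
      | zero => simp
      | succ n => simp only [Nat.succ_sub_one]; ring
    calc 2*N^(m+2)
        = (N-m)*(2*N^(m+1)) + m*(2*N^(m+1)) := hsplit
      _ ≤ (N-m)*(2*N*(N.descFactorial m) + m*(m-1)*N^m) + m*(2*N^(m+1)) :=
          Nat.add_le_add_right hstep1 _
      _ = 2*N*((N-m)*(N.descFactorial m)) + ((N-m)*(m*(m-1)*N^m) + 2*m*N^(m+1)) := by ring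
      _ ≤ 2*N*((N-m)*(N.descFactorial m)) + (N*(m*(m-1)*N^m) + 2*m*N^(m+1)) := by
          refine Nat.add_le_add_left (Nat.add_le_add_right ?_ _) _
          exact Nat.mul_le_mul_right _ (Nat.sub_le N m)
      _ = 2*N*((N-m)*(N.descFactorial m)) + (m*(m-1) + 2*m)*N^(m+1) := by ring
      _ = 2*N*(N.descFactorial (m+1)) + ((m+1)*((m+1)-1))*N^(m+1) := by rw [hdesc, hmm]
      _ = 2*N*(N.descFactorial (m+1)) + (m+1)*((m+1)-1)*N^(m+1) := by ring

lemma desc_lb {N m : ℕ} (hN : 0 < N) (hmN : m ≤ N) (h2 : m*(m-1) ≤ N) :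
    N^m ≤ 2 * N.descFactorial m := by
  have h := desc_lb_aux N m hmN
  have h3 : m*(m-1)*N^m ≤ N*N^m := Nat.mul_le_mul_right _ h2
  have h4 : 2*N^(m+1) ≤ 2*N*(N.descFactorial m) + N^(m+1) := by
    calc 2*N^(m+1) ≤ 2*N*(N.descFactorial m) + m*(m-1)*N^m := h
      _ ≤ 2*N*(N.descFactorial m) + N*N^m := Nat.add_le_add_left h3 _
      _ = 2*N*(N.descFactorial m) + N^(m+1) := by ring
  have h5 : N^(m+1) ≤ 2*N*(N.descFactorial m) := by omega
  have h6 : N*N^m ≤ N*(2*(N.descFactorial m)) := by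
    calc N*N^m = N^(m+1) := by ring
      _ ≤ 2*N*(N.descFactorial m) := h5
      _ = N*(2*(N.descFactorial m)) := by ring
  exact Nat.le_of_mul_le_mul_left h6 hN

lemma arith_nat {N k m₁ m₂ : ℕ} (hk : 0 < k) (hN4 : 4*k^2 < N)
    (h1 : 1 ≤ m₁) (h2 : m₁ ≤ 2*k) (h3 : 1 ≤ m₂) (h4 : m₂ ≤ 2*k)
    (hgt : 2*k < m₁ + m₂) :
    N^(2*k+1) * (m₁.factorial * m₂.factorial)^2
      ≤ 4 * ((2*k).factorial)^2 * (N.descFactorial m₁ * N.descFactorial m₂) := by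
  have hN : 0 < N := by omega
  set e := m₁ + m₂ - (2*k + 1) with he
  have hesum : m₁ + m₂ = 2*k + 1 + e := by omega
  have hfb := factorial_bound k e m₁ m₂ h1 h2 h3 h4 hesum
  have hkN : (2*k)^2 ≤ N := by nlinarith
  have hpow : (2*k)^(2*e) ≤ N^e := by
    calc (2*k)^(2*e) = ((2*k)^2)^e := by rw [← pow_mul]
      _ ≤ N^e := Nat.pow_le_pow_left hkN e
  have hd : ∀ m, 1 ≤ m → m ≤ 2*k → N^m ≤ 2 * N.descFactorial m := by
    intro m hm1 hm2
    refine desc_lb hN (by nlinarith) ?_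
    calc m*(m-1) ≤ (2*k)*(2*k) := Nat.mul_le_mul hm2 (by omega)
      _ ≤ N := by nlinarith
  have hd₁ := hd m₁ h1 h2
  have hd₂ := hd m₂ h3 h4
  calc N^(2*k+1) * (m₁.factorial * m₂.factorial)^2
      ≤ N^(2*k+1) * ((2*k).factorial * (2*k)^e)^2 :=
        Nat.mul_le_mul_left _ (Nat.pow_le_pow_left hfb 2)
    _ = N^(2*k+1) * ((2*k).factorial)^2 * (2*k)^(2*e) := by ring
    _ ≤ N^(2*k+1) * ((2*k).factorial)^2 * N^e :=
        Nat.mul_le_mul_left _ hpow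
    _ = ((2*k).factorial)^2 * (N^(m₁) * N^(m₂)) := by
        have hp : N^(m₁) * N^(m₂) = N^(2*k+1) * N^e := by
          rw [← pow_add, ← pow_add, ← hesum]
        rw [hp]
        ring
    _ ≤ ((2*k).factorial)^2 * ((2 * N.descFactorial m₁) * (2 * N.descFactorial m₂)) :=
        Nat.mul_le_mul_left _ (Nat.mul_le_mul hd₁ hd₂)
    _ = 4 * ((2*k).factorial)^2 * (N.descFactorial m₁ * N.descFactorial m₂) := by ring

lemma ineq2_real {N k m₁ m₂ : ℕ} (hk : 0 < k) (hN4 : 4*k^2 < N)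
    (h1 : 1 ≤ m₁) (h2 : m₁ ≤ 2*k) (h3 : 1 ≤ m₂) (h4 : m₂ ≤ 2*k)
    (hgt : 2*k < m₁ + m₂) :
    (N : ℝ)^k * (m₁.factorial : ℝ) * (m₂.factorial : ℝ) /
        Real.sqrt ((N.descFactorial m₁ : ℝ) * (N.descFactorial m₂ : ℝ))
      ≤ 2 * ((2*k).factorial : ℝ) / Real.sqrt N := by
  have hN : 0 < N := by omega
  have hdpos : ∀ m, m ≤ 2*k → 0 < N.descFactorial m := by
    intro m hm
    refine Nat.pos_of_ne_zero fun h => ?_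
    have := Nat.descFactorial_eq_zero_iff_lt.mp h
    nlinarith
  have hd₁ := hdpos m₁ h2
  have hd₂ := hdpos m₂ h4
  have hdd : (0:ℝ) < (N.descFactorial m₁ : ℝ) * (N.descFactorial m₂ : ℝ) := by
    have : (0:ℝ) < (N.descFactorial m₁ : ℝ) := by exact_mod_cast hd₁
    have h' : (0:ℝ) < (N.descFactorial m₂ : ℝ) := by exact_mod_cast hd₂
    positivity
  have hNr : (0:ℝ) < (N:ℝ) := by exact_mod_cast hN
  rw [div_le_div_iff₀ (Real.sqrt_pos.mpr hdd) (Real.sqrt_pos.mpr hNr)]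
  have hA : (0:ℝ) ≤ (N:ℝ)^k * (m₁.factorial : ℝ) * (m₂.factorial : ℝ) := by positivity
  have e1 : (N:ℝ)^k * (m₁.factorial : ℝ) * (m₂.factorial : ℝ) * Real.sqrt N
      = Real.sqrt (((N:ℝ)^k * (m₁.factorial : ℝ) * (m₂.factorial : ℝ))^2 * N) := by
    rw [Real.sqrt_mul (by positivity), Real.sqrt_sq hA]
  have e2 : 2 * ((2*k).factorial : ℝ) * Real.sqrt ((N.descFactorial m₁ : ℝ) * (N.descFactorial m₂ : ℝ))
      = Real.sqrt ((2 * ((2*k).factorial : ℝ))^2 *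
          ((N.descFactorial m₁ : ℝ) * (N.descFactorial m₂ : ℝ))) := by
    conv_rhs => rw [Real.sqrt_mul (by positivity), Real.sqrt_sq (by positivity)]
  rw [e1, e2]
  apply Real.sqrt_le_sqrt
  have hcast := (Nat.cast_le (α := ℝ)).mpr (arith_nat hk hN4 h1 h2 h3 h4 hgt)
  push_cast at hcast
  calc ((N:ℝ)^k * (m₁.factorial : ℝ) * (m₂.factorial : ℝ))^2 * N
      = (N:ℝ)^(2*k+1) * ((m₁.factorial : ℝ) * (m₂.factorial : ℝ))^2 := by
        rw [show 2*k+1 = k+k+1 by ring]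
        ring
    _ ≤ 4 * (((2*k).factorial : ℝ))^2 *
          ((N.descFactorial m₁ : ℝ) * (N.descFactorial m₂ : ℝ)) := by
        calc (N:ℝ)^(2*k+1) * ((m₁.factorial : ℝ) * (m₂.factorial : ℝ))^2
            = (N:ℝ)^(2*k+1) * ((m₁.factorial : ℝ))^2 * ((m₂.factorial : ℝ))^2 := by ring
          _ ≤ 4 * (((2*k).factorial : ℝ))^2 *
              ((N.descFactorial m₁ : ℝ) * (N.descFactorial m₂ : ℝ)) := by
              nlinarith [hcast]
    _ = (2 * ((2*k).factorial : ℝ))^2 *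
          ((N.descFactorial m₁ : ℝ) * (N.descFactorial m₂ : ℝ)) := by ring


lemma Fkk_eq (N k : ℕ) (a b : Fin (2*k) → Fin N) :
    Fkk N k a b = ((Real.sqrt N : ℂ))⁻¹ ^ (2*k) *
      efun N (∑ j : Fin (2*k), (if (j : ℕ) < k then (1:ℤ) else -1) *
        (((a j : ℕ) : ℤ) + 1) * (((b j : ℕ) : ℤ) + 1)) := by
  calc Fkk N k a b
      = ∏ j : Fin (2*k), ((Real.sqrt N : ℂ))⁻¹ *
          efun N ((if (j : ℕ) < k then (1:ℤ) else -1) *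
            (((a j : ℕ) : ℤ) + 1) * (((b j : ℕ) : ℤ) + 1)) := by
        rw [Fkk]
        refine Finset.prod_congr rfl fun j _ => ?_
        by_cases hj : (j : ℕ) < k
        · rw [if_pos hj, if_pos hj, Fmat, efun]
          congr 2
          push_cast
          ring
        · rw [if_neg hj, if_neg hj, Fmat]
          rw [map_mul, map_inv₀, Complex.conj_ofReal]
          congr 1
          rw [← Complex.exp_conj, efun]
          congr 1
          simp only [map_div₀, map_mul, map_ofNat, Complex.conj_ofReal, Complex.conj_I,
            map_add, map_one, map_natCast]
          push_cast
          ring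
    _ = ((Real.sqrt N : ℂ))⁻¹ ^ (2*k) *
          efun N (∑ j : Fin (2*k), (if (j : ℕ) < k then (1:ℤ) else -1) *
            (((a j : ℕ) : ℤ) + 1) * (((b j : ℕ) : ℤ) + 1)) := by
        rw [Finset.prod_mul_distrib, Finset.prod_const, Finset.card_univ, Fintype.card_fin,
          efun_sum]

lemma matEltI_eq (N k : ℕ) (r₁ r₂ : Setoid (Fin (2*k))) :
    matEltI N k r₁ r₂ =
      ((Real.sqrt (N.descFactorial (numBlocks r₁)) : ℂ))⁻¹ *
      ((Real.sqrt (N.descFactorial (numBlocks r₂)) : ℂ))⁻¹ *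
      ((Real.sqrt N : ℂ))⁻¹ ^ (2*k) *
      (∑ a ∈ Finset.univ.filter (· ∈ Iset N (2*k) r₁),
        ∑ b ∈ Finset.univ.filter (· ∈ Iset N (2*k) r₂),
          efun N (∑ j : Fin (2*k), (if (j : ℕ) < k then (1:ℤ) else -1) *
            (((a j : ℕ) : ℤ) + 1) * (((b j : ℕ) : ℤ) + 1))) := by
  set c₁ := ((Real.sqrt (N.descFactorial (numBlocks r₁)) : ℂ))⁻¹ with hc₁
  set c₂ := ((Real.sqrt (N.descFactorial (numBlocks r₂)) : ℂ))⁻¹ with hc₂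
  have hterm : ∀ a b : Fin (2*k) → Fin N,
      (starRingEnd ℂ) (ketI N (2*k) r₁ a) * Fkk N k a b * ketI N (2*k) r₂ b
        = if a ∈ Iset N (2*k) r₁ then
            (if b ∈ Iset N (2*k) r₂ then c₁ * c₂ * Fkk N k a b else 0) else 0 := by
    intro a b
    simp only [ketI, iset_ncard]
    split_ifs with h1 h2
    · rw [map_inv₀, Complex.conj_ofReal, hc₁, hc₂]
      ring
    · simp
    · simp
    · simp
  rw [matEltI]
  calc (∑ a : Fin (2*k) → Fin N, ∑ b : Fin (2*k) → Fin N,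
          (starRingEnd ℂ) (ketI N (2*k) r₁ a) * Fkk N k a b * ketI N (2*k) r₂ b)
      = ∑ a : Fin (2*k) → Fin N, ∑ b : Fin (2*k) → Fin N,
          (if a ∈ Iset N (2*k) r₁ then
            (if b ∈ Iset N (2*k) r₂ then c₁ * c₂ * Fkk N k a b else 0) else 0) :=
        Finset.sum_congr rfl fun a _ => Finset.sum_congr rfl fun b _ => hterm a b
    _ = ∑ a ∈ Finset.univ.filter (· ∈ Iset N (2*k) r₁),
          ∑ b ∈ Finset.univ.filter (· ∈ Iset N (2*k) r₂), c₁ * c₂ * Fkk N k a b := by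
        rw [Finset.sum_filter]
        refine Finset.sum_congr rfl fun a _ => ?_
        split_ifs with h1
        · rw [Finset.sum_filter]
        · simp
    _ = ∑ a ∈ Finset.univ.filter (· ∈ Iset N (2*k) r₁),
          ∑ b ∈ Finset.univ.filter (· ∈ Iset N (2*k) r₂),
          (c₁ * c₂ * ((Real.sqrt N : ℂ))⁻¹ ^ (2*k)) *
            efun N (∑ j : Fin (2*k), (if (j : ℕ) < k then (1:ℤ) else -1) *
              (((a j : ℕ) : ℤ) + 1) * (((b j : ℕ) : ℤ) + 1)) := by
        refine Finset.sum_congr rfl fun a _ => Finset.sum_congr rfl fun b _ => ?_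
        rw [Fkk_eq]
        ring
    _ = c₁ * c₂ * ((Real.sqrt N : ℂ))⁻¹ ^ (2*k) *
          (∑ a ∈ Finset.univ.filter (· ∈ Iset N (2*k) r₁),
            ∑ b ∈ Finset.univ.filter (· ∈ Iset N (2*k) r₂),
              efun N (∑ j : Fin (2*k), (if (j : ℕ) < k then (1:ℤ) else -1) *
                (((a j : ℕ) : ℤ) + 1) * (((b j : ℕ) : ℤ) + 1))) := by
        rw [Finset.mul_sum]
        refine Finset.sum_congr rfl fun a _ => ?_
        rw [Finset.mul_sum]

theorem stmt19 (N k : ℕ) (hN : 0 < N) (hk : 0 < k) (hNk : 4*k^2 < N)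
    (r₁ r₂ : Setoid (Fin (2*k)))
    (hgt : 2*k < numBlocks r₁ + numBlocks r₂) :
    ‖matEltI N k r₁ r₂‖ ≤
        (N : ℝ) ^ k * (Nat.factorial (numBlocks r₁)) * (Nat.factorial (numBlocks r₂)) /
          Real.sqrt ((N.descFactorial (numBlocks r₁)) * (N.descFactorial (numBlocks r₂))) ∧
      (N : ℝ) ^ k * (Nat.factorial (numBlocks r₁)) * (Nat.factorial (numBlocks r₂)) /
          Real.sqrt ((N.descFactorial (numBlocks r₁)) * (N.descFactorial (numBlocks r₂))) ≤
        2 * (Nat.factorial (2*k)) / Real.sqrt N := by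
  have h2k : 0 < 2*k := by omega
  have hm₁pos := numBlocks_pos h2k r₁
  have hm₂pos := numBlocks_pos h2k r₂
  have hm₁le := numBlocks_le r₁
  have hm₂le := numBlocks_le r₂
  set m₁ := numBlocks r₁ with hm₁
  set m₂ := numBlocks r₂ with hm₂
  set d₁ := N.descFactorial m₁ with hd₁
  set d₂ := N.descFactorial m₂ with hd₂
  have hd₁pos : 0 < d₁ := by
    refine Nat.pos_of_ne_zero fun h => ?_
    have := Nat.descFactorial_eq_zero_iff_lt.mp h
    nlinarith
  have hd₂pos : 0 < d₂ := by
    refine Nat.pos_of_ne_zero fun h => ?_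
    have := Nat.descFactorial_eq_zero_iff_lt.mp h
    nlinarith
  have hsd₁ : (0:ℝ) < Real.sqrt d₁ := Real.sqrt_pos.mpr (by exact_mod_cast hd₁pos)
  have hsd₂ : (0:ℝ) < Real.sqrt d₂ := Real.sqrt_pos.mpr (by exact_mod_cast hd₂pos)
  have hNpos : (0:ℝ) < (N:ℝ) := by exact_mod_cast hN
  have hNk_pos : (0:ℝ) < (N:ℝ)^k := by positivity
  constructor
  · -- first inequality
    rw [matEltI_eq N k r₁ r₂]
    have habs : ‖(((Real.sqrt d₁ : ℂ))⁻¹ * ((Real.sqrt d₂ : ℂ))⁻¹ *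
        ((Real.sqrt N : ℂ))⁻¹ ^ (2*k) * (∑ a ∈ Finset.univ.filter (· ∈ Iset N (2*k) r₁),
          ∑ b ∈ Finset.univ.filter (· ∈ Iset N (2*k) r₂),
            efun N (∑ j : Fin (2*k), (if (j : ℕ) < k then (1:ℤ) else -1) *
              (((a j : ℕ) : ℤ) + 1) * (((b j : ℕ) : ℤ) + 1))))‖
        = (Real.sqrt d₁)⁻¹ * (Real.sqrt d₂)⁻¹ * ((Real.sqrt N)^(2*k))⁻¹ *
          ‖(∑ a ∈ Finset.univ.filter (· ∈ Iset N (2*k) r₁),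
          ∑ b ∈ Finset.univ.filter (· ∈ Iset N (2*k) r₂),
            efun N (∑ j : Fin (2*k), (if (j : ℕ) < k then (1:ℤ) else -1) *
              (((a j : ℕ) : ℤ) + 1) * (((b j : ℕ) : ℤ) + 1)))‖ := by
      rw [norm_mul, norm_mul, norm_mul, norm_inv, norm_inv, norm_pow, norm_inv,
        Complex.norm_real, Complex.norm_real, Complex.norm_real,
        Real.norm_eq_abs, Real.norm_eq_abs, Real.norm_eq_abs,
        abs_of_nonneg (Real.sqrt_nonneg _), abs_of_nonneg (Real.sqrt_nonneg _),
        abs_of_nonneg (Real.sqrt_nonneg _), inv_pow]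
    rw [habs]
    have hSb := S_bound hN (fun j : Fin (2*k) => if (j : ℕ) < k then (1:ℤ) else -1)
      (fun j => by split_ifs <;> simp) r₁ (Finset.univ.filter (· ∈ Iset N (2*k) r₂))
    have hsqN : (Real.sqrt N)^(2*k) = (N:ℝ)^k := by
      rw [pow_mul, Real.sq_sqrt (by positivity : (0:ℝ) ≤ (N:ℝ))]
    rw [hsqN]
    have hfinal : (Real.sqrt d₁)⁻¹ * (Real.sqrt d₂)⁻¹ * ((N:ℝ)^k)⁻¹ *
        (((m₁.factorial : ℝ)) * (N : ℝ) ^ (2*k))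
        ≤ (N : ℝ) ^ k * (m₁.factorial : ℝ) * (m₂.factorial : ℝ) /
          Real.sqrt ((d₁ : ℝ) * (d₂ : ℝ)) := by
      rw [Real.sqrt_mul (by positivity), div_eq_mul_inv, mul_inv]
      have hp2 : (N:ℝ)^(2*k) = (N:ℝ)^k * (N:ℝ)^k := by
        rw [two_mul, pow_add]
      rw [hp2]
      have h1 : (Real.sqrt d₁)⁻¹ * (Real.sqrt d₂)⁻¹ * ((N:ℝ)^k)⁻¹ *
          ((m₁.factorial : ℝ) * ((N:ℝ)^k * (N:ℝ)^k))
          = (Real.sqrt d₁)⁻¹ * (Real.sqrt d₂)⁻¹ * (N:ℝ)^k * (m₁.factorial : ℝ) := by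
        field_simp
      rw [h1]
      have hf₂ : (1:ℝ) ≤ (m₂.factorial : ℝ) := by
        exact_mod_cast Nat.one_le_iff_ne_zero.mpr (Nat.factorial_ne_zero m₂)
      calc (Real.sqrt d₁)⁻¹ * (Real.sqrt d₂)⁻¹ * (N:ℝ)^k * (m₁.factorial : ℝ)
          ≤ (Real.sqrt d₁)⁻¹ * (Real.sqrt d₂)⁻¹ * (N:ℝ)^k * (m₁.factorial : ℝ) *
            (m₂.factorial : ℝ) := by
            nlinarith [mul_pos (mul_pos (mul_pos (inv_pos.mpr hsd₁) (inv_pos.mpr hsd₂))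
              hNk_pos) (show (0:ℝ) < (m₁.factorial : ℝ) by positivity)]
        _ = (N : ℝ) ^ k * (m₁.factorial : ℝ) * (m₂.factorial : ℝ) *
              ((Real.sqrt d₁)⁻¹ * (Real.sqrt d₂)⁻¹) := by ring
    calc (Real.sqrt d₁)⁻¹ * (Real.sqrt d₂)⁻¹ * ((N:ℝ)^k)⁻¹ *
          ‖(∑ a ∈ Finset.univ.filter (· ∈ Iset N (2*k) r₁),
          ∑ b ∈ Finset.univ.filter (· ∈ Iset N (2*k) r₂),
            efun N (∑ j : Fin (2*k), (if (j : ℕ) < k then (1:ℤ) else -1) *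
              (((a j : ℕ) : ℤ) + 1) * (((b j : ℕ) : ℤ) + 1)))‖
        ≤ (Real.sqrt d₁)⁻¹ * (Real.sqrt d₂)⁻¹ * ((N:ℝ)^k)⁻¹ *
          (((m₁.factorial : ℝ)) * (N : ℝ) ^ (2*k)) := by
          refine mul_le_mul_of_nonneg_left ?_ (by positivity)
          exact hSb
      _ ≤ (N : ℝ) ^ k * (m₁.factorial : ℝ) * (m₂.factorial : ℝ) /
          Real.sqrt ((d₁ : ℝ) * (d₂ : ℝ)) := hfinal
  · exact ineq2_real hk hNk hm₁pos hm₁le hm₂pos hm₂le hgt
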